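/- Let m ∈ ℂ and z ∈ ℂ ∖ (−∞,0]. Then the Wronskian of 𝕀_m and 𝕀_{−m} satisfies 𝕀_m(z) · 𝕀_{−m}'(z) − 𝕀_m'(z) · 𝕀_{−m}(z) = −sin(π·m), where ' denotes the complex derivative. -/

import Mathlib

open Complex Finset Filter Topology Metric

/-- reciprocal Gamma recurrence, valid for all complex `x` -/
lemma invGamma_rec (x : ℂ) : (Complex.Gamma x)⁻¹ = x * (Complex.Gamma (x + 1))⁻¹ := by
  rcases eq_or_ne x 0 with rfl | hx
  · simp [Complex.Gamma_zero]
  · rw [Complex.Gamma_add_one x hx, mul_inv, ← mul_assoc, mul_inv_cancel₀ hx, one_mul]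

noncomputable def aI (m : ℂ) (n : ℕ) : ℂ :=
  ((n.factorial : ℂ) * Complex.Gamma (m + n + 1))⁻¹

lemma aI_rec (m : ℂ) (n : ℕ) : aI m n = ((n : ℂ) + 1) * (m + n + 1) * aI m (n + 1) := by
  unfold aI
  rw [mul_inv, mul_inv]
  have he : m + (n:ℂ) + 1 + 1 = m + ((n + 1 : ℕ) : ℂ) + 1 := by push_cast; ring
  have h1 : (Complex.Gamma (m + n + 1))⁻¹ = (m + n + 1) * (Complex.Gamma (m + (n + 1 : ℕ) + 1))⁻¹ := by
    rw [invGamma_rec (m + n + 1), he]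
  have h2 : ((n.factorial : ℂ))⁻¹ = ((n : ℂ) + 1) * (((n + 1).factorial : ℂ))⁻¹ := by
    have hne : ((n : ℂ) + 1) ≠ 0 := Nat.cast_add_one_ne_zero n
    have hf : ((n.factorial : ℂ)) ≠ 0 := Nat.cast_ne_zero.mpr n.factorial_ne_zero
    rw [Nat.factorial_succ]
    push_cast
    field_simp
  rw [h1, h2]
  ring

lemma invGamma_bdd (m : ℂ) : ∃ C : ℝ, ∀ n : ℕ, ‖(Complex.Gamma (m + n + 1))⁻¹‖ ≤ C := by
  set n₀ : ℕ := ⌈‖m‖⌉₊ with hn₀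
  have hm_le : ‖m‖ ≤ n₀ := Nat.le_ceil _
  have key : ∀ k : ℕ, ‖(Complex.Gamma (m + (n₀ + k : ℕ) + 1))⁻¹‖ ≤ ‖(Complex.Gamma (m + n₀ + 1))⁻¹‖ := by
    intro k
    induction k with
    | zero => simp
    | succ k ih =>
      have hnorm : (1 : ℝ) ≤ ‖m + (n₀ + k : ℕ) + 1‖ := by
        have h1 : ‖((n₀ + k : ℕ) : ℂ) + 1‖ - ‖-m‖ ≤ ‖(((n₀ + k : ℕ) : ℂ) + 1) - (-m)‖ :=
          norm_sub_norm_le _ _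
        have h2 : ‖((n₀ + k : ℕ) : ℂ) + 1‖ = (n₀ : ℝ) + k + 1 := by
          have : ((n₀ + k : ℕ) : ℂ) + 1 = ((n₀ + k + 1 : ℕ) : ℂ) := by push_cast; ring
          rw [this, Complex.norm_natCast]; push_cast; ring
        have h3 : (((n₀ + k : ℕ) : ℂ) + 1) - (-m) = m + (n₀ + k : ℕ) + 1 := by ring
        rw [h3] at h1
        rw [h2, norm_neg] at h1
        have h4 : ‖m‖ ≤ (n₀ : ℝ) := hm_le
        linarith
      have hne : m + (n₀ + k : ℕ) + 1 ≠ 0 := by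
        intro h; rw [h] at hnorm; simp at hnorm; linarith
      have hrec : (Complex.Gamma (m + (n₀ + (k+1) : ℕ) + 1))⁻¹
          = (Complex.Gamma ((m + (n₀ + k : ℕ) + 1) + 1))⁻¹ := by
        congr 2; push_cast; ring
      have h5 : (m + (n₀ + k : ℕ) + 1) * (Complex.Gamma ((m + (n₀ + k : ℕ) + 1) + 1))⁻¹
          = (Complex.Gamma (m + (n₀ + k : ℕ) + 1))⁻¹ := (invGamma_rec _).symm
      have h6 : ‖(Complex.Gamma ((m + (n₀ + k : ℕ) + 1) + 1))⁻¹‖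
          ≤ ‖(Complex.Gamma (m + (n₀ + k : ℕ) + 1))⁻¹‖ := by
        rw [← h5, norm_mul]
        nth_rewrite 1 [← one_mul ‖(Complex.Gamma ((m + (n₀ + k : ℕ) + 1) + 1))⁻¹‖]
        gcongr
      rw [hrec]
      exact h6.trans ih
  refine ⟨(Finset.range (n₀ + 1)).sup' ⟨0, by simp⟩ (fun j => ‖(Complex.Gamma (m + j + 1))⁻¹‖), fun n => ?_⟩
  rcases le_or_gt n n₀ with h | h
  · have hmem : n ∈ Finset.range (n₀ + 1) := Finset.mem_range.mpr (by omega)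
    exact Finset.le_sup' (fun j : ℕ => ‖(Complex.Gamma (m + (j:ℂ) + 1))⁻¹‖) hmem
  · have hmem : n₀ ∈ Finset.range (n₀ + 1) := Finset.mem_range.mpr (by omega)
    have hn : n = n₀ + (n - n₀) := by omega
    rw [hn]
    exact (key (n - n₀)).trans (Finset.le_sup' (fun j : ℕ => ‖(Complex.Gamma (m + (j:ℂ) + 1))⁻¹‖) hmem)

lemma norm_aI_le (m : ℂ) {C : ℝ} (hC : ∀ n : ℕ, ‖(Complex.Gamma (m + n + 1))⁻¹‖ ≤ C) (n : ℕ) :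
    ‖aI m n‖ ≤ C / n.factorial := by
  calc ‖aI m n‖ = ((n.factorial : ℝ))⁻¹ * ‖(Complex.Gamma (m + n + 1))⁻¹‖ := by
        rw [aI, mul_inv, norm_mul, norm_inv, Complex.norm_natCast]
    _ ≤ ((n.factorial : ℝ))⁻¹ * C := by
        have : (0:ℝ) ≤ ((n.factorial : ℝ))⁻¹ := by positivity
        exact mul_le_mul_of_nonneg_left (hC n) this
    _ = C / n.factorial := by rw [div_eq_inv_mul]

lemma key_summable (c : ℝ) (B : ℝ) (K : ℝ) (hc : 0 ≤ c) (hB : 0 ≤ B) :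
    Summable (fun n : ℕ => (2 * n + c) * B ^ n / n.factorial * K) := by
  apply Summable.mul_right
  refine Summable.of_nonneg_of_le (fun n => by positivity) (fun n => ?_)
    ((Real.summable_pow_div_factorial (2 * B)).mul_left (2 + c))
  have h2 : (2 * (n : ℝ) + c) ≤ (2 + c) * 2 ^ n := by
    have h1 : (n : ℝ) ≤ 2 ^ n := by exact_mod_cast (Nat.lt_two_pow_self (n := n)).le
    have h3 : (1 : ℝ) ≤ 2 ^ n := one_le_pow₀ (by norm_num)
    nlinarith
  calc (2 * (n:ℝ) + c) * B ^ n / n.factorial ≤ ((2 + c) * 2 ^ n) * B ^ n / n.factorial := by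
        gcongr
    _ = (2 + c) * ((2 * B) ^ n / n.factorial) := by rw [mul_pow]; ring

/-- The modified Bessel function for dimension 1,
`𝕀_m(z) = Σ_{n=0}^∞ √π (z/2)^(2n+m+1/2) / (n! Γ(m+n+1))`, principal branch powers. -/
noncomputable def Ibes (m z : ℂ) : ℂ :=
  ∑' n : ℕ, (Real.sqrt Real.pi : ℂ) * (z / 2) ^ (2 * (n : ℂ) + m + 1 / 2) /
    ((n.factorial : ℂ) * Complex.Gamma (m + (n : ℂ) + 1))

noncomputable def FT (m : ℂ) (n : ℕ) (z : ℂ) : ℂ :=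
  (Real.sqrt Real.pi : ℂ) * (z / 2) ^ (2 * (n : ℂ) + m + 1 / 2) /
    ((n.factorial : ℂ) * Complex.Gamma (m + (n : ℂ) + 1))

noncomputable def FT' (m : ℂ) (n : ℕ) (z : ℂ) : ℂ :=
  (Real.sqrt Real.pi : ℂ) *
      ((2 * (n : ℂ) + m + 1 / 2) * (z / 2) ^ (2 * (n : ℂ) + m + 1 / 2 - 1) * (1 / 2)) /
    ((n.factorial : ℂ) * Complex.Gamma (m + (n : ℂ) + 1))

lemma Ibes_eq (m z : ℂ) : Ibes m z = ∑' n, FT m n z := rfl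

lemma half_mem_slitPlane {w : ℂ} (hw : w ∈ Complex.slitPlane) : w / 2 ∈ Complex.slitPlane := by
  rw [Complex.mem_slitPlane_iff] at hw ⊢
  have hre : (w / 2).re = w.re / 2 := by
    simp [Complex.div_re, Complex.normSq_apply]
  have him : (w / 2).im = w.im / 2 := by
    simp [Complex.div_im, Complex.normSq_apply]
  rcases hw with h | h
  · left; rw [hre]; linarith
  · right; rw [him]; intro hc; apply h; linarith

lemma hasDerivAt_FT (m : ℂ) (n : ℕ) {z : ℂ} (hz : z ∈ Complex.slitPlane) :
    HasDerivAt (fun w => FT m n w) (FT' m n z) z := by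
  have h2 : HasDerivAt (fun w : ℂ => w / 2) (1 / 2) z := (hasDerivAt_id z).div_const 2
  have h0 : z / 2 ∈ Complex.slitPlane := half_mem_slitPlane hz
  have h3 := (h2.cpow_const (c := 2 * (n : ℂ) + m + 1 / 2) h0)
  exact (h3.const_mul ((Real.sqrt Real.pi : ℂ))).div_const _

lemma FT_eq (m : ℂ) (n : ℕ) {z : ℂ} (hz : z / 2 ≠ 0) :
    FT m n z = (Real.sqrt Real.pi : ℂ) * (z / 2) ^ (m + 1 / 2 : ℂ) *
      (aI m n * ((z / 2) ^ (2 : ℕ)) ^ n) := by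
  have he : 2 * (n : ℂ) + m + 1 / 2 = ((2 * n : ℕ) : ℂ) + (m + 1 / 2) := by push_cast; ring
  rw [FT, he, Complex.cpow_add _ _ hz, Complex.cpow_natCast, pow_mul, div_eq_mul_inv]
  simp only [aI]
  ring

lemma FT'_eq (m : ℂ) (n : ℕ) {z : ℂ} (hz : z / 2 ≠ 0) :
    FT' m n z = (Real.sqrt Real.pi : ℂ) * (z / 2) ^ (m - 1 / 2 : ℂ) * (1 / 2) *
      ((2 * (n : ℂ) + m + 1 / 2) * aI m n * ((z / 2) ^ (2 : ℕ)) ^ n) := by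
  have he : 2 * (n : ℂ) + m + 1 / 2 - 1 = ((2 * n : ℕ) : ℂ) + (m - 1 / 2) := by push_cast; ring
  rw [FT', he, Complex.cpow_add _ _ hz, Complex.cpow_natCast, pow_mul, div_eq_mul_inv]
  simp only [aI]
  ring

lemma norm_lin_le (m : ℂ) (n : ℕ) : ‖2 * (n : ℂ) + m + 1 / 2‖ ≤ 2 * n + (‖m‖ + 1) := by
  calc ‖2 * (n : ℂ) + m + 1 / 2‖ ≤ ‖2 * (n : ℂ) + m‖ + ‖(1 / 2 : ℂ)‖ := norm_add_le _ _
    _ ≤ (‖2 * (n : ℂ)‖ + ‖m‖) + ‖(1 / 2 : ℂ)‖ := by gcongr; exact norm_add_le _ _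
    _ = 2 * n + ‖m‖ + 1 / 2 := by
        rw [norm_mul, Complex.norm_natCast]
        norm_num
    _ ≤ 2 * n + (‖m‖ + 1) := by linarith

lemma summable_aux1 (m : ℂ) (q : ℂ) : Summable (fun n : ℕ => ‖aI m n * q ^ n‖) := by
  obtain ⟨C, hC⟩ := invGamma_bdd m
  refine Summable.of_nonneg_of_le (fun n => norm_nonneg _) (fun n => ?_)
    ((Real.summable_pow_div_factorial ‖q‖).mul_left C)
  rw [norm_mul, norm_pow]
  calc ‖aI m n‖ * ‖q‖ ^ n ≤ (C / n.factorial) * ‖q‖ ^ n := by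
        gcongr; exact norm_aI_le m hC n
    _ = C * (‖q‖ ^ n / n.factorial) := by ring

lemma summable_aux2 (m : ℂ) (q : ℂ) :
    Summable (fun n : ℕ => ‖(2 * (n : ℂ) + m + 1 / 2) * aI m n * q ^ n‖) := by
  obtain ⟨C, hC⟩ := invGamma_bdd m
  have hC0 : 0 ≤ C := le_trans (norm_nonneg _) (hC 0)
  refine Summable.of_nonneg_of_le (fun n => norm_nonneg _) (fun n => ?_)
    (key_summable (‖m‖ + 1) ‖q‖ C (by positivity) (norm_nonneg _))
  rw [norm_mul, norm_mul, norm_pow]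
  calc ‖2 * (n : ℂ) + m + 1 / 2‖ * ‖aI m n‖ * ‖q‖ ^ n
      ≤ (2 * n + (‖m‖ + 1)) * (C / n.factorial) * ‖q‖ ^ n := by
        gcongr
        · exact norm_lin_le m n
        · exact norm_aI_le m hC n
    _ = (2 * n + (‖m‖ + 1)) * ‖q‖ ^ n / n.factorial * C := by ring

lemma summable_FT (m : ℂ) {w : ℂ} (hw : w / 2 ≠ 0) : Summable (fun n => FT m n w) := by
  have h : (fun n => FT m n w) = fun n =>
      ((Real.sqrt Real.pi : ℂ) * (w / 2) ^ (m + 1 / 2 : ℂ)) * (aI m n * ((w / 2) ^ (2 : ℕ)) ^ n) := by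
    funext n; rw [FT_eq m n hw]
  rw [h]
  exact ((summable_aux1 m ((w / 2) ^ (2 : ℕ))).of_norm.mul_left _)

lemma hasDerivAt_Ibes (m : ℂ) {z : ℂ} (hz : z ∈ Complex.slitPlane) :
    HasDerivAt (Ibes m) (∑' n, FT' m n z) z := by
  have hz0 : z ≠ 0 := Complex.slitPlane_ne_zero hz
  have hznorm : 0 < ‖z‖ := norm_pos_iff.mpr hz0
  obtain ⟨r, hr0, hrsub⟩ := Metric.isOpen_iff.mp Complex.isOpen_slitPlane z hz
  set ρ : ℝ := min (r / 2) (‖z‖ / 2) with hρdef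
  have hρ0 : 0 < ρ := lt_min (by linarith) (by linarith)
  have hball : Metric.closedBall z ρ ⊆ Complex.slitPlane := by
    intro w hw
    apply hrsub
    rw [Metric.mem_closedBall] at hw
    rw [Metric.mem_ball]
    calc dist w z ≤ ρ := hw
      _ ≤ r / 2 := min_le_left _ _
      _ < r := by linarith
  have hwnorm : ∀ w ∈ Metric.closedBall z ρ, ‖z‖ / 2 ≤ ‖w‖ ∧ ‖w‖ ≤ ‖z‖ + ρ := by
    intro w hw
    rw [Metric.mem_closedBall, dist_eq_norm] at hw
    have hρz : ρ ≤ ‖z‖ / 2 := min_le_right _ _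
    constructor
    · have h1 : ‖z‖ - ‖w‖ ≤ ‖z - w‖ := norm_sub_norm_le _ _
      rw [norm_sub_rev] at h1
      linarith
    · have h2 : ‖w‖ - ‖z‖ ≤ ‖w - z‖ := norm_sub_norm_le _ _
      linarith
  have hw20 : ∀ w ∈ Metric.closedBall z ρ, w / 2 ≠ 0 := by
    intro w hw
    have hlo := (hwnorm w hw).1
    intro h
    rw [div_eq_zero_iff] at h
    rcases h with h | h
    · rw [h, norm_zero] at hlo; linarith
    · norm_num at h
  obtain ⟨D, hD⟩ := (isCompact_closedBall z ρ).exists_bound_of_continuousOn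
      (f := fun w : ℂ => (w / 2) ^ (m - 1 / 2 : ℂ)) (by
    intro w hw
    apply ContinuousAt.continuousWithinAt
    have hc : ContinuousAt (fun x : ℂ => x / 2) w := (continuous_id.div_const 2).continuousAt
    exact ContinuousAt.comp (x := w) (f := fun x : ℂ => x / 2)
      (g := fun x : ℂ => x ^ (m - 1/2 : ℂ))
      (continuousAt_cpow_const (half_mem_slitPlane (hball hw))) hc)
  obtain ⟨C, hC⟩ := invGamma_bdd m
  have hC0 : 0 ≤ C := le_trans (norm_nonneg _) (hC 0)
  have hD0 : 0 ≤ D := le_trans (norm_nonneg _) (hD z (Metric.mem_closedBall_self hρ0.le))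
  set B : ℝ := ((‖z‖ + ρ) / 2) ^ 2 with hB
  have hB0 : 0 ≤ B := by positivity
  set K : ℝ := Real.sqrt Real.pi * D * (1 / 2) * C with hK
  have hu_sum : Summable (fun n : ℕ => (2 * n + (‖m‖ + 1)) * B ^ n / n.factorial * K) :=
    key_summable _ _ _ (by positivity) hB0
  have hbound : ∀ (n : ℕ), ∀ w ∈ Metric.ball z ρ,
      ‖FT' m n w‖ ≤ (2 * n + (‖m‖ + 1)) * B ^ n / n.factorial * K := by
    intro n w hw
    have hw' : w ∈ Metric.closedBall z ρ := Metric.ball_subset_closedBall hw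
    obtain ⟨hlo, hhi⟩ := hwnorm w hw'
    have hw0 : w / 2 ≠ 0 := hw20 w hw'
    rw [FT'_eq m n hw0]
    simp only [norm_mul, norm_pow]
    have h1 : ‖((Real.sqrt Real.pi : ℝ) : ℂ)‖ = Real.sqrt Real.pi := by
      rw [Complex.norm_real, Real.norm_eq_abs, _root_.abs_of_nonneg (Real.sqrt_nonneg _)]
    have h12 : ‖(1 / 2 : ℂ)‖ = 1 / 2 := by norm_num
    have h2 : ‖(w / 2) ^ (m - 1 / 2 : ℂ)‖ ≤ D := hD w hw'
    have h3 : ‖2 * (n : ℂ) + m + 1 / 2‖ ≤ 2 * n + (‖m‖ + 1) := norm_lin_le m n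
    have h4 : ‖aI m n‖ ≤ C / n.factorial := norm_aI_le m hC n
    have h5 : ‖w / 2‖ ^ 2 ≤ B := by
      rw [hB]
      have h2n : ‖(2 : ℂ)‖ = 2 := Complex.norm_ofNat 2
      have : ‖w / 2‖ ≤ (‖z‖ + ρ) / 2 := by
        rw [norm_div, h2n]
        linarith
      exact pow_le_pow_left₀ (norm_nonneg _) this 2
    rw [h1, h12]
    calc Real.sqrt Real.pi * ‖(w / 2) ^ (m - 1 / 2 : ℂ)‖ * (1 / 2) *
          (‖2 * (n : ℂ) + m + 1 / 2‖ * ‖aI m n‖ * (‖w / 2‖ ^ 2) ^ n)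
        ≤ Real.sqrt Real.pi * D * (1 / 2) *
          ((2 * n + (‖m‖ + 1)) * (C / n.factorial) * B ^ n) := by
          gcongr <;> positivity
      _ = (2 * n + (‖m‖ + 1)) * B ^ n / n.factorial * K := by rw [hK]; ring
  have hUnif : TendstoUniformlyOn (fun (N : ℕ) w => ∑ n ∈ Finset.range N, FT' m n w)
      (fun w => ∑' n, FT' m n w) atTop (Metric.ball z ρ) :=
    tendstoUniformlyOn_tsum_nat hu_sum hbound
  apply hasDerivAt_of_tendstoUniformlyOn (f := fun (N : ℕ) w => ∑ n ∈ Finset.range N, FT m n w)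
      Metric.isOpen_ball hUnif ?_ ?_ (Metric.mem_ball_self hρ0)
  · filter_upwards with N w hw
    exact HasDerivAt.fun_sum (fun n _ =>
      hasDerivAt_FT m n (hball (Metric.ball_subset_closedBall hw)))
  · intro w hw
    have hw0 : w / 2 ≠ 0 := hw20 w (Metric.ball_subset_closedBall hw)
    exact (summable_FT m hw0).hasSum.tendsto_sum_nat

lemma telescope (m : ℂ) (N : ℕ) (hN : N ≠ 0) :
    ∑ n ∈ Finset.range (N + 1), aI m n * aI (-m) (N - n) * ((N : ℂ) - 2 * n - m) = 0 := by
  have hN0 : (N : ℂ) ≠ 0 := Nat.cast_ne_zero.mpr hN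
  set T : ℕ → ℂ := fun n =>
      if n ≤ N then (n : ℂ) * (m + n) * aI m n * aI (-m) (N - n) / N else 0 with hT
  have key : ∀ n ∈ Finset.range (N + 1),
      aI m n * aI (-m) (N - n) * ((N : ℂ) - 2 * n - m) = T (n + 1) - T n := by
    intro n hn
    rw [Finset.mem_range] at hn
    have hn' : n ≤ N := by omega
    rcases eq_or_lt_of_le hn' with rfl | hlt
    · simp only [hT]
      rw [if_neg (by omega), if_pos le_rfl, Nat.sub_self]
      field_simp
      ring
    · simp only [hT]
      rw [if_pos (by omega), if_pos hn']
      have h1 : aI m n = ((n : ℂ) + 1) * (m + n + 1) * aI m (n + 1) := aI_rec m n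
      have hsub : N - n - 1 + 1 = N - n := by omega
      have hcast : ((N - n - 1 : ℕ) : ℂ) = (N : ℂ) - n - 1 := by
        have e1 : N - n - 1 = N - (n + 1) := by omega
        rw [e1, Nat.cast_sub (by omega)]
        push_cast
        ring
      have h2 : aI (-m) (N - n - 1)
          = ((N : ℂ) - n) * (-m + ((N : ℂ) - n)) * aI (-m) (N - n) := by
        have h3 := aI_rec (-m) (N - n - 1)
        rw [hsub, hcast] at h3
        rw [h3]; ring
      have hNn : N - (n + 1) = N - n - 1 := by omega
      have hcast2 : ((n + 1 : ℕ) : ℂ) = (n : ℂ) + 1 := by push_cast; ring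
      rw [hNn, hcast2, h2, h1]
      field_simp
      ring
  rw [Finset.sum_congr rfl key, Finset.sum_range_sub]
  simp only [hT]
  rw [if_neg (by omega), if_pos (by omega)]
  simp

lemma diag_zero (m q : ℂ) (N : ℕ) (hN : N ≠ 0) :
    ∑ kl ∈ Finset.HasAntidiagonal.antidiagonal N,
      ((aI m kl.1 * q ^ kl.1) *
          ((2 * (kl.2 : ℂ) + -m + 1 / 2) * aI (-m) kl.2 * q ^ kl.2)
        - (2 * (kl.1 : ℂ) + m + 1 / 2) * aI m kl.1 * q ^ kl.1 *
          (aI (-m) kl.2 * q ^ kl.2)) = 0 := by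
  rw [Finset.Nat.sum_antidiagonal_eq_sum_range_succ_mk]
  have key : ∀ i ∈ Finset.range (N + 1),
      (aI m i * q ^ i) * ((2 * ((N - i : ℕ) : ℂ) + -m + 1 / 2) * aI (-m) (N - i) * q ^ (N - i))
        - (2 * (i : ℂ) + m + 1 / 2) * aI m i * q ^ i * (aI (-m) (N - i) * q ^ (N - i))
      = (2 * q ^ N) * (aI m i * aI (-m) (N - i) * ((N : ℂ) - 2 * i - m)) := by
    intro i hi
    rw [Finset.mem_range] at hi
    have hci : ((N - i : ℕ) : ℂ) = (N : ℂ) - i := by rw [Nat.cast_sub (by omega)]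
    have hqi : q ^ i * q ^ (N - i) = q ^ N := by rw [← pow_add]; congr 1; omega
    rw [hci, ← hqi]
    ring
  rw [Finset.sum_congr rfl key, ← Finset.mul_sum, telescope m N hN, mul_zero]

lemma aI_zero (m : ℂ) : aI m 0 = (Complex.Gamma (m + 1))⁻¹ := by
  unfold aI
  simp

lemma final_step (m : ℂ) :
    (Real.pi : ℂ) * (m * ((Complex.Gamma (m + 1))⁻¹ * (Complex.Gamma (-m + 1))⁻¹))
      = Complex.sin ((Real.pi : ℂ) * m) := by
  have hrec : m * (Complex.Gamma (m + 1))⁻¹ = (Complex.Gamma m)⁻¹ := (invGamma_rec m).symm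
  have step1 : (Real.pi : ℂ) * (m * ((Complex.Gamma (m + 1))⁻¹ * (Complex.Gamma (-m + 1))⁻¹))
      = (Real.pi : ℂ) * ((Complex.Gamma m)⁻¹ * (Complex.Gamma (1 - m))⁻¹) := by
    rw [show (-m + 1 : ℂ) = 1 - m from by ring]
    calc (Real.pi : ℂ) * (m * ((Complex.Gamma (m + 1))⁻¹ * (Complex.Gamma (1 - m))⁻¹))
        = (Real.pi : ℂ) * ((m * (Complex.Gamma (m + 1))⁻¹) * (Complex.Gamma (1 - m))⁻¹) := by
          ring
      _ = (Real.pi : ℂ) * ((Complex.Gamma m)⁻¹ * (Complex.Gamma (1 - m))⁻¹) := by rw [hrec]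
  rw [step1, ← mul_inv, Complex.Gamma_mul_Gamma_one_sub m]
  rcases eq_or_ne (Complex.sin ((Real.pi : ℂ) * m)) 0 with h0 | h0
  · rw [h0]; simp
  · have hπ : (Real.pi : ℂ) ≠ 0 := Complex.ofReal_ne_zero.mpr Real.pi_ne_zero
    rw [inv_div, mul_comm, div_mul_cancel₀ _ hπ]

/-- Wronskian identity: `W(𝕀_m, 𝕀_{−m})(z) = −sin(πm)` on `ℂ ∖ (−∞,0]`. -/
theorem stmt18 (m z : ℂ) (hz : z ∈ Complex.slitPlane) :
    Ibes m z * deriv (Ibes (-m)) z - deriv (Ibes m) z * Ibes (-m) z =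
      -Complex.sin (Real.pi * m) := by
  have hz0 : z ≠ 0 := Complex.slitPlane_ne_zero hz
  have hw0 : z / 2 ≠ 0 := by
    intro h
    rw [div_eq_zero_iff] at h
    rcases h with h | h
    · exact hz0 h
    · norm_num at h
  have h1 := hasDerivAt_Ibes m hz
  have h2 := hasDerivAt_Ibes (-m) hz
  rw [h1.deriv, h2.deriv]
  set q : ℂ := (z / 2) ^ (2 : ℕ) with hq
  have e1 : Ibes m z = ((Real.sqrt Real.pi : ℂ) * (z / 2) ^ (m + 1 / 2 : ℂ)) *
      ∑' n : ℕ, aI m n * q ^ n := by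
    rw [Ibes_eq, ← tsum_mul_left]
    exact tsum_congr fun n => by rw [FT_eq m n hw0]
  have e1' : Ibes (-m) z = ((Real.sqrt Real.pi : ℂ) * (z / 2) ^ (-m + 1 / 2 : ℂ)) *
      ∑' n : ℕ, aI (-m) n * q ^ n := by
    rw [Ibes_eq, ← tsum_mul_left]
    exact tsum_congr fun n => by rw [FT_eq (-m) n hw0]
  have e2 : (∑' n : ℕ, FT' m n z) = ((Real.sqrt Real.pi : ℂ) * (z / 2) ^ (m - 1 / 2 : ℂ) * (1 / 2)) *
      ∑' n : ℕ, (2 * (n : ℂ) + m + 1 / 2) * aI m n * q ^ n := by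
    rw [← tsum_mul_left]
    exact tsum_congr fun n => by rw [FT'_eq m n hw0]
  have e2' : (∑' n : ℕ, FT' (-m) n z) = ((Real.sqrt Real.pi : ℂ) * (z / 2) ^ (-m - 1 / 2 : ℂ) * (1 / 2)) *
      ∑' n : ℕ, (2 * (n : ℂ) + -m + 1 / 2) * aI (-m) n * q ^ n := by
    rw [← tsum_mul_left]
    exact tsum_congr fun n => by rw [FT'_eq (-m) n hw0]
  rw [e1, e1', e2, e2']
  have hπ : ((Real.sqrt Real.pi : ℝ) : ℂ) * ((Real.sqrt Real.pi : ℝ) : ℂ) = (Real.pi : ℂ) := by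
    rw [← Complex.ofReal_mul, Real.mul_self_sqrt Real.pi_pos.le]
  have hcpow1 : (z / 2) ^ (m + 1 / 2 : ℂ) * (z / 2) ^ (-m - 1 / 2 : ℂ) = 1 := by
    rw [← Complex.cpow_add _ _ hw0, show (m + 1 / 2) + (-m - 1 / 2) = (0 : ℂ) from by ring,
      Complex.cpow_zero]
  have hcpow2 : (z / 2) ^ (m - 1 / 2 : ℂ) * (z / 2) ^ (-m + 1 / 2 : ℂ) = 1 := by
    rw [← Complex.cpow_add _ _ hw0, show (m - 1 / 2) + (-m + 1 / 2) = (0 : ℂ) from by ring,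
      Complex.cpow_zero]
  have hkey : (((Real.sqrt Real.pi : ℂ) * (z / 2) ^ (m + 1 / 2 : ℂ)) * ∑' n : ℕ, aI m n * q ^ n) *
        (((Real.sqrt Real.pi : ℂ) * (z / 2) ^ (-m - 1 / 2 : ℂ) * (1 / 2)) *
          ∑' n : ℕ, (2 * (n : ℂ) + -m + 1 / 2) * aI (-m) n * q ^ n) -
      (((Real.sqrt Real.pi : ℂ) * (z / 2) ^ (m - 1 / 2 : ℂ) * (1 / 2)) *
          ∑' n : ℕ, (2 * (n : ℂ) + m + 1 / 2) * aI m n * q ^ n) *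
        (((Real.sqrt Real.pi : ℂ) * (z / 2) ^ (-m + 1 / 2 : ℂ)) * ∑' n : ℕ, aI (-m) n * q ^ n)
      = (Real.pi : ℂ) * (1 / 2) *
        ((∑' n : ℕ, aI m n * q ^ n) *
            (∑' n : ℕ, (2 * (n : ℂ) + -m + 1 / 2) * aI (-m) n * q ^ n) -
          (∑' n : ℕ, (2 * (n : ℂ) + m + 1 / 2) * aI m n * q ^ n) *
            (∑' n : ℕ, aI (-m) n * q ^ n)) := by
    calc _ = (((Real.sqrt Real.pi : ℂ) * (Real.sqrt Real.pi : ℂ)) *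
            ((z / 2) ^ (m + 1 / 2 : ℂ) * (z / 2) ^ (-m - 1 / 2 : ℂ)) * (1 / 2)) *
            ((∑' n : ℕ, aI m n * q ^ n) *
              (∑' n : ℕ, (2 * (n : ℂ) + -m + 1 / 2) * aI (-m) n * q ^ n)) -
          (((Real.sqrt Real.pi : ℂ) * (Real.sqrt Real.pi : ℂ)) *
            ((z / 2) ^ (m - 1 / 2 : ℂ) * (z / 2) ^ (-m + 1 / 2 : ℂ)) * (1 / 2)) *
            ((∑' n : ℕ, (2 * (n : ℂ) + m + 1 / 2) * aI m n * q ^ n) *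
              (∑' n : ℕ, aI (-m) n * q ^ n)) := by ring
      _ = _ := by rw [hπ, hcpow1, hcpow2]; ring
  rw [hkey]
  have hP : Summable fun n : ℕ => ‖aI m n * q ^ n‖ := summable_aux1 m q
  have hP' : Summable fun n : ℕ => ‖aI (-m) n * q ^ n‖ := summable_aux1 (-m) q
  have hR : Summable fun n : ℕ => ‖(2 * (n : ℂ) + m + 1 / 2) * aI m n * q ^ n‖ := summable_aux2 m q
  have hR' : Summable fun n : ℕ => ‖(2 * (n : ℂ) + -m + 1 / 2) * aI (-m) n * q ^ n‖ :=
    summable_aux2 (-m) q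
  have c1 : (∑' n : ℕ, aI m n * q ^ n) *
        (∑' n : ℕ, (2 * (n : ℂ) + -m + 1 / 2) * aI (-m) n * q ^ n)
      = ∑' N : ℕ, ∑ kl ∈ Finset.HasAntidiagonal.antidiagonal N,
          (aI m kl.1 * q ^ kl.1) * ((2 * (kl.2 : ℂ) + -m + 1 / 2) * aI (-m) kl.2 * q ^ kl.2) :=
    tsum_mul_tsum_eq_tsum_sum_antidiagonal_of_summable_norm hP hR'
  have c2 : (∑' n : ℕ, (2 * (n : ℂ) + m + 1 / 2) * aI m n * q ^ n) *
        (∑' n : ℕ, aI (-m) n * q ^ n)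
      = ∑' N : ℕ, ∑ kl ∈ Finset.HasAntidiagonal.antidiagonal N,
          ((2 * (kl.1 : ℂ) + m + 1 / 2) * aI m kl.1 * q ^ kl.1) * (aI (-m) kl.2 * q ^ kl.2) :=
    tsum_mul_tsum_eq_tsum_sum_antidiagonal_of_summable_norm hR hP'
  have hs1 : Summable fun N : ℕ => ∑ kl ∈ Finset.HasAntidiagonal.antidiagonal N,
      (aI m kl.1 * q ^ kl.1) * ((2 * (kl.2 : ℂ) + -m + 1 / 2) * aI (-m) kl.2 * q ^ kl.2) :=
    (summable_norm_sum_mul_antidiagonal_of_summable_norm hP hR').of_norm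
  have hs2 : Summable fun N : ℕ => ∑ kl ∈ Finset.HasAntidiagonal.antidiagonal N,
      ((2 * (kl.1 : ℂ) + m + 1 / 2) * aI m kl.1 * q ^ kl.1) * (aI (-m) kl.2 * q ^ kl.2) :=
    (summable_norm_sum_mul_antidiagonal_of_summable_norm hR hP').of_norm
  rw [c1, c2, ← Summable.tsum_sub hs1 hs2]
  have hcongr : (fun N : ℕ => (∑ kl ∈ Finset.HasAntidiagonal.antidiagonal N,
        (aI m kl.1 * q ^ kl.1) * ((2 * (kl.2 : ℂ) + -m + 1 / 2) * aI (-m) kl.2 * q ^ kl.2)) -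
      ∑ kl ∈ Finset.HasAntidiagonal.antidiagonal N,
        ((2 * (kl.1 : ℂ) + m + 1 / 2) * aI m kl.1 * q ^ kl.1) * (aI (-m) kl.2 * q ^ kl.2))
      = fun N : ℕ => ∑ kl ∈ Finset.HasAntidiagonal.antidiagonal N,
        ((aI m kl.1 * q ^ kl.1) * ((2 * (kl.2 : ℂ) + -m + 1 / 2) * aI (-m) kl.2 * q ^ kl.2)
          - (2 * (kl.1 : ℂ) + m + 1 / 2) * aI m kl.1 * q ^ kl.1 * (aI (-m) kl.2 * q ^ kl.2)) := by
    funext N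
    rw [Finset.sum_sub_distrib]
  rw [hcongr, tsum_eq_single 0 (fun N hN => diag_zero m q N hN)]
  have hval : ∑ kl ∈ Finset.HasAntidiagonal.antidiagonal 0,
      ((aI m kl.1 * q ^ kl.1) * ((2 * (kl.2 : ℂ) + -m + 1 / 2) * aI (-m) kl.2 * q ^ kl.2)
        - (2 * (kl.1 : ℂ) + m + 1 / 2) * aI m kl.1 * q ^ kl.1 * (aI (-m) kl.2 * q ^ kl.2))
      = -(2 * m) * (aI m 0 * aI (-m) 0) := by
    rw [Finset.Nat.antidiagonal_zero, Finset.sum_singleton]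
    simp only [Nat.cast_zero, pow_zero]
    ring
  rw [hval, aI_zero m, aI_zero (-m)]
  calc (Real.pi : ℂ) * (1 / 2) *
        (-(2 * m) * ((Complex.Gamma (m + 1))⁻¹ * (Complex.Gamma (-m + 1))⁻¹))
      = -((Real.pi : ℂ) * (m * ((Complex.Gamma (m + 1))⁻¹ * (Complex.Gamma (-m + 1))⁻¹))) := by
        ring
    _ = -Complex.sin ((Real.pi : ℂ) * m) := by rw [final_step m]
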